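/- (Computation of l₂ for SSVI.) Let ρ ∈ [0,1), γ = √(1−ρ²) and μ = −ρ/√(1−ρ²). Then the unique zero of g₂ in (0, ∞) is l₂(ρ) = 1/tan(arccos(−ρ)/3); equivalently, writing x = l/√(l²+1), the positive zeros of g₂ correspond exactly to the solutions of ρ = x·(3 − 4x²) with x ∈ (1/2, √3/2], and the relevant solution is x(ρ) = cos(arccos(−ρ)/3), the largest real root of 4x³ − 3x + ρ. -/

import Mathlib

/-- SVI normalized total variance shape: `N(l) = γ + ρ·l + √(l²+1)`. -/
noncomputable def Nf (γ ρ l : ℝ) : ℝ := γ + ρ * l + Real.sqrt (l ^ 2 + 1)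

/-- `N'(l) = ρ + l/√(l²+1)`. -/
noncomputable def Nf' (ρ l : ℝ) : ℝ := ρ + l / Real.sqrt (l ^ 2 + 1)

/-- `N''(l) = (l²+1)^(−3/2)`. -/
noncomputable def Nf'' (l : ℝ) : ℝ := (l ^ 2 + 1) ^ (-(3 : ℝ) / 2)

/-- `h(l) = 1 − N'(l)·(l+μ)/(2N(l))`. -/
noncomputable def hf (γ ρ μ l : ℝ) : ℝ := 1 - Nf' ρ l * (l + μ) / (2 * Nf γ ρ l)

/-- `g(l) = N'(l)/4`. -/
noncomputable def gf (ρ l : ℝ) : ℝ := Nf' ρ l / 4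

/-- `g₂(l) = N''(l) − N'(l)²/(2N(l))`. -/
noncomputable def g2 (γ ρ l : ℝ) : ℝ := Nf'' l - (Nf' ρ l) ^ 2 / (2 * Nf γ ρ l)

/-- `G₁(l) = (h(l) − b·g(l))·(h(l) + b·g(l))`. -/
noncomputable def G1 (γ b ρ μ l : ℝ) : ℝ :=
  (hf γ ρ μ l - b * gf ρ l) * (hf γ ρ μ l + b * gf ρ l)

/-- Fukasawa (weak no-arbitrage) conditions: both factors of `G₁` are positive on `ℝ`. -/
def FukasawaCond (γ b ρ μ : ℝ) : Prop :=
  ∀ l : ℝ, 0 < hf γ ρ μ l - b * gf ρ l ∧ 0 < hf γ ρ μ l + b * gf ρ l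

/-- No Butterfly arbitrage (Martini–Mingone characterization): Fukasawa conditions plus
`G₁ + (b/(2σ))·g₂ ≥ 0` on `ℝ`. -/
def ArbitrageFree (γ b ρ μ σ : ℝ) : Prop :=
  FukasawaCond γ b ρ μ ∧ ∀ l : ℝ, 0 ≤ G1 γ b ρ μ l + b / (2 * σ) * g2 γ ρ l

lemma ssvi_rpow_aux (l : ℝ) : (l^2+1 : ℝ) ^ (-(3:ℝ)/2) = 1 / (Real.sqrt (l^2+1))^3 := by
  have h : (0:ℝ) < l^2+1 := by positivity
  rw [Real.sqrt_eq_rpow, ← Real.rpow_natCast ((l^2+1:ℝ)^((1:ℝ)/2)) 3, ← Real.rpow_mul h.le,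
    show (-(3:ℝ)/2) = -((1:ℝ)/2*3) by ring, Real.rpow_neg h.le, one_div]
  norm_num

set_option maxHeartbeats 1000000 in
lemma ssvi_key_poly (ρ l s A : ℝ) (hρ0 : 0 ≤ ρ) (hρ1 : ρ < 1) (hl : 0 < l)
    (hs2 : s^2 = l^2+1) (hs0 : 0 < s) (hA0 : 0 ≤ A) (hA2 : A^2 = 1-ρ^2) :
    (2*(A+ρ*l+s) = s*(ρ*s+l)^2) ↔
      ((1/2 < l/s ∧ l/s ≤ Real.sqrt 3/2) ∧ ρ = l/s*(3 - 4*(l/s)^2)) := by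
  have hs1 : 1 < s := by nlinarith
  have hρl : 0 ≤ ρ*l := mul_nonneg hρ0 hl.le
  have hN : 0 < A + ρ*l + s := by linarith
  have hs30 : (0:ℝ) < s^3 := by positivity
  have hEE' : (2*(A+ρ*l+s) = s*(ρ*s+l)^2) ↔ A*s = s^2+ρ*l*s-2 := by
    constructor
    · intro hE
      have h0 : (A+ρ*l+s)*s*(2 - s^2 - ρ*l*s + A*s) = 0 := by
        linear_combination s*hE - (s^2*(1-ρ^2))*hs2 + s^2*hA2
      have h1 : (A+ρ*l+s)*s ≠ 0 := by positivity
      have h2 := (mul_eq_zero.mp h0).resolve_left h1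
      linarith
    · intro hE'
      have h0 : s*(2*(A+ρ*l+s) - s*(ρ*s+l)^2) = 0 := by
        linear_combination ((A+ρ*l+s)*s)*hE' + (s^2*(1-ρ^2))*hs2 - s^2*hA2
      have h2 := (mul_eq_zero.mp h0).resolve_left (ne_of_gt hs0)
      linarith
  rw [hEE']
  have hrepr : l/s*(3 - 4*(l/s)^2) = (3*l - l^3)/s^3 := by
    field_simp
    linear_combination 3*hs2
  have hxiff : (ρ = l/s*(3 - 4*(l/s)^2)) ↔ ρ*s^3 = 3*l - l^3 := by
    rw [hrepr, eq_div_iff (ne_of_gt hs30)]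
  clear hEE' hrepr
  constructor
  · intro hE'
    have hsq : (1-ρ^2)*s^2 = (s^2+ρ*l*s-2)^2 := by
      linear_combination (A*s + (s^2+ρ*l*s-2))*hE' - s^2*hA2
    have hfac : (ρ*s^3 - (3*l - l^3))*(ρ*s + l) = 0 := by
      linear_combination (-1:ℝ)*hsq + (-s^2-l^2+4+ρ^2*s^2-ρ*l*s)*hs2
    have hρsl : 0 < ρ*s + l := by
      have := mul_nonneg hρ0 hs0.le; linarith
    have hP : ρ*s^3 = 3*l - l^3 := by
      have := (mul_eq_zero.mp hfac).resolve_right (ne_of_gt hρsl)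
      linarith
    refine ⟨⟨?_, ?_⟩, hxiff.mpr hP⟩
    · -- 1/2 < l/s, i.e. 1 < 3l², strictly
      have hR0 : 0 ≤ s^2+ρ*l*s-2 := by rw [← hE']; positivity
      have hRval : (s^2+ρ*l*s-2)*s^2 = 3*l^2-1 := by
        linear_combination l*hP + (s^2+l^2-1)*hs2
      have hl3 : 1 ≤ 3*l^2 := by nlinarith [mul_nonneg hR0 (sq_nonneg s)]
      have hl3s : 1 < 3*l^2 := by
        rcases lt_or_eq_of_le hl3 with h | h
        · exact h
        · exfalso
          have hs6 : (s^3)^2 = (l^2+1)^3 := by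
            linear_combination (s^4+s^2*(l^2+1)+(l^2+1)^2)*hs2
          have hcube : (3*l-l^3)^2 = (s^3)^2 := by
            linear_combination (-1:ℝ)*hs6 + (3*l^2-1)*h
          have h7 : (ρ*s^3)^2 = (s^3)^2 := by rw [hP, hcube]
          have h6 : (0:ℝ) < (s^3)^2 := by positivity
          have h8 : (ρ^2-1)*((s^3)^2) = 0 := by linear_combination h7
          rcases mul_eq_zero.mp h8 with h9 | h9
          · nlinarith [hρ0, hρ1]
          · exact absurd h9 (ne_of_gt h6)
      rw [lt_div_iff₀ hs0]
      have h5 : (2*l-s)*(2*l+s) = 3*l^2-1 := by linear_combination (-1:ℝ)*hs2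
      have h6 : 0 < (2*l-s)*(2*l+s) := by rw [h5]; linarith
      rcases mul_pos_iff.mp h6 with ⟨ha, _⟩ | ⟨_, hb⟩
      · linarith
      · linarith
    · -- l/s ≤ √3/2 from l² ≤ 3
      have hl2u : l^2 ≤ 3 := by nlinarith [mul_nonneg hρ0 hs30.le]
      rw [div_le_iff₀ hs0]
      have h3 : (Real.sqrt 3)^2 = 3 := Real.sq_sqrt (by norm_num)
      have ht0 : 0 ≤ Real.sqrt 3/2*s := by positivity
      have h5 : (Real.sqrt 3/2*s)^2 = 3/4*s^2 := by linear_combination (s^2/4)*h3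
      have h4 : l^2 ≤ (Real.sqrt 3/2*s)^2 := by
        by_contra hcon; push_neg at hcon; nlinarith [h5, hs2, hl2u]
      calc l = Real.sqrt (l^2) := (Real.sqrt_sq hl.le).symm
        _ ≤ Real.sqrt ((Real.sqrt 3/2*s)^2) := Real.sqrt_le_sqrt h4
        _ = Real.sqrt 3/2*s := Real.sqrt_sq ht0
  · rintro ⟨⟨hx1, hx2⟩, hr⟩
    have hP : ρ*s^3 = 3*l - l^3 := hxiff.mp hr
    clear hxiff hr hx2
    have hl3s : 1 < 3*l^2 := by
      rw [lt_div_iff₀ hs0] at hx1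
      nlinarith [hx1, hs0, hl]
    have hRval : (s^2+ρ*l*s-2)*s^2 = 3*l^2-1 := by
      linear_combination l*hP + (s^2+l^2-1)*hs2
    have hR0 : 0 < s^2+ρ*l*s-2 := by nlinarith [sq_nonneg s]
    have hsq : (A*s)^2 = (s^2+ρ*l*s-2)^2 := by
      linear_combination s^2*hA2 - (ρ*s+l)*hP + (-s^2-l^2+4+ρ^2*s^2-ρ*l*s)*hs2
    calc A*s = Real.sqrt ((A*s)^2) := (Real.sqrt_sq (by positivity)).symm
      _ = Real.sqrt ((s^2+ρ*l*s-2)^2) := by rw [hsq]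
      _ = s^2+ρ*l*s-2 := Real.sqrt_sq hR0.le

lemma ssvi_key_lemma (ρ l : ℝ) (hρ0 : 0 ≤ ρ) (hρ1 : ρ < 1) (hl : 0 < l) :
    g2 (Real.sqrt (1 - ρ ^ 2)) ρ l = 0 ↔
      l / Real.sqrt (l ^ 2 + 1) ∈ Set.Ioc (1 / 2 : ℝ) (Real.sqrt 3 / 2) ∧
      ρ = l / Real.sqrt (l ^ 2 + 1) * (3 - 4 * (l / Real.sqrt (l ^ 2 + 1)) ^ 2) := by
  set s := Real.sqrt (l^2+1) with hsdef
  set A := Real.sqrt (1-ρ^2) with hAdef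
  have hs2 : s^2 = l^2+1 := Real.sq_sqrt (by positivity)
  have hs0 : 0 < s := Real.sqrt_pos.mpr (by positivity)
  have hA0 : 0 ≤ A := Real.sqrt_nonneg _
  have hA2 : A^2 = 1-ρ^2 := Real.sq_sqrt (by nlinarith)
  have hρl : 0 ≤ ρ*l := mul_nonneg hρ0 hl.le
  have hN : 0 < A + ρ*l + s := by linarith
  have hg : g2 A ρ l = 0 ↔ 2*(A+ρ*l+s) = s*(ρ*s+l)^2 := by
    unfold g2 Nf Nf' Nf''
    rw [ssvi_rpow_aux l, ← hsdef, sub_eq_zero,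
      div_eq_div_iff (by positivity : (0:ℝ) < s^3).ne' (by linarith : (0:ℝ) < 2*(A+ρ*l+s)).ne']
    have haux : (ρ + l/s)^2*(s^3) = s*(ρ*s+l)^2 := by
      field_simp
    rw [haux, one_mul]
  rw [hg, Set.mem_Ioc]
  exact ssvi_key_poly ρ l s A hρ0 hρ1 hl hs2 hs0 hA0 hA2

set_option maxHeartbeats 4000000 in
/-- computation of the positive zero l₂ of g₂ for SSVI. -/
theorem ssvi_l2_computation (ρ : ℝ) (hρ : ρ ∈ Set.Ico (0 : ℝ) 1) :
    (∀ l > 0, (g2 (Real.sqrt (1 - ρ ^ 2)) ρ l = 0 ↔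
        l = 1 / Real.tan (Real.arccos (-ρ) / 3))) ∧
    (∀ l > 0, (g2 (Real.sqrt (1 - ρ ^ 2)) ρ l = 0 ↔
        l / Real.sqrt (l ^ 2 + 1) ∈ Set.Ioc (1 / 2 : ℝ) (Real.sqrt 3 / 2) ∧
        ρ = l / Real.sqrt (l ^ 2 + 1) * (3 - 4 * (l / Real.sqrt (l ^ 2 + 1)) ^ 2))) ∧
    Real.cos (Real.arccos (-ρ) / 3) ∈ Set.Ioc (1 / 2 : ℝ) (Real.sqrt 3 / 2) ∧
    ρ = Real.cos (Real.arccos (-ρ) / 3) * (3 - 4 * Real.cos (Real.arccos (-ρ) / 3) ^ 2) ∧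
    (∀ y : ℝ, 4 * y ^ 3 - 3 * y + ρ = 0 → y ≤ Real.cos (Real.arccos (-ρ) / 3)) := by
  obtain ⟨hρ0, hρ1⟩ := hρ
  have hpi := Real.pi_pos
  set φ := Real.arccos (-ρ) with hφdef
  have hφub : φ < Real.pi := by
    rw [hφdef, Real.arccos_neg]
    have : 0 < Real.arccos ρ := Real.arccos_pos.mpr hρ1
    linarith
  have hφlb : Real.pi/2 ≤ φ := by
    rw [hφdef, Real.arccos_neg]
    have : Real.arccos ρ ≤ Real.pi/2 := Real.arccos_le_pi_div_two.mpr hρ0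
    linarith
  set θ := φ/3 with hθdef
  have hθ1 : Real.pi/6 ≤ θ := by rw [hθdef]; linarith
  have hθ2 : θ < Real.pi/3 := by rw [hθdef]; linarith
  have hθpos : 0 < θ := by linarith
  set c := Real.cos θ with hcdef
  have hcub : c ≤ Real.sqrt 3/2 := by
    rw [hcdef, ← Real.cos_pi_div_six]
    exact Real.cos_le_cos_of_nonneg_of_le_pi (by positivity) (by linarith) hθ1
  have hclb : 1/2 < c := by
    rw [hcdef, ← Real.cos_pi_div_three]
    exact Real.cos_lt_cos_of_nonneg_of_le_pi (by linarith) (by linarith) hθ2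
  have hc_mem : c ∈ Set.Ioc (1/2:ℝ) (Real.sqrt 3/2) := ⟨hclb, hcub⟩
  have h4 : ρ = c*(3 - 4*c^2) := by
    have h3θ : Real.cos (3*θ) = -ρ := by
      rw [show 3*θ = φ by rw [hθdef]; ring, hφdef]
      exact Real.cos_arccos (by linarith) (by linarith)
    have htm := Real.cos_three_mul θ
    rw [h3θ, ← hcdef] at htm
    linear_combination (-1:ℝ)*htm
  have h5 : ∀ y : ℝ, 4*y^3 - 3*y + ρ = 0 → y ≤ c := by
    intro y hy
    by_contra hcon; push_neg at hcon
    have hy0 : 1/2 < y := lt_trans hclb hcon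
    have hprod : (y - c)*(4*y^2+4*y*c+4*c^2-3) = 0 := by linear_combination hy - h4
    have h2 : 0 < 4*y^2+4*y*c+4*c^2-3 := by nlinarith [hclb, hy0, hcon]
    nlinarith [mul_pos (sub_pos.mpr hcon) h2, hprod]
  have part2 := fun l hl => ssvi_key_lemma ρ l hρ0 hρ1 hl
  refine ⟨?_, part2, hc_mem, h4, h5⟩
  -- Part 1
  intro l hl
  rw [part2 l hl, Set.mem_Ioc]
  have hsθ : 0 < Real.sin θ := Real.sin_pos_of_pos_of_lt_pi hθpos (by linarith)
  have hcθ : 0 < c := by linarith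
  have htan : Real.tan θ = Real.sin θ / c := by rw [hcdef]; exact Real.tan_eq_sin_div_cos θ
  have hl₀v : 1/Real.tan θ = c/Real.sin θ := by rw [htan, one_div_div]
  set l₀ := 1/Real.tan θ with hl₀def
  have hl₀pos : 0 < l₀ := by rw [hl₀v]; positivity
  have hpyth : Real.sin θ^2 + Real.cos θ^2 = 1 := Real.sin_sq_add_cos_sq θ
  rw [← hcdef] at hpyth
  have hx0 : l₀^2+1 = (1/Real.sin θ)^2 := by
    rw [hl₀v]
    field_simp
    linear_combination hpyth
  have hx : l₀ / Real.sqrt (l₀^2+1) = c := by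
    rw [hx0, Real.sqrt_sq (by positivity), hl₀v]
    field_simp
  -- square roots facts for l
  have hs2 : (Real.sqrt (l^2+1))^2 = l^2+1 := Real.sq_sqrt (by positivity)
  have hs0 : 0 < Real.sqrt (l^2+1) := Real.sqrt_pos.mpr (by positivity)
  set x := l / Real.sqrt (l^2+1) with hxdef
  have hls : x * Real.sqrt (l^2+1) = l := div_mul_cancel₀ l hs0.ne'
  have hlx : l^2 = x^2*(l^2+1) := by
    rw [hxdef, div_pow, hs2, div_mul_cancel₀ _ (by positivity : (l:ℝ)^2+1 ≠ 0)]
  have hsq3 : Real.sqrt 3 < 2 := by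
    nlinarith [Real.sq_sqrt (show (0:ℝ) ≤ 3 by norm_num), Real.sqrt_nonneg 3]
  clear_value φ θ c l₀ x
  constructor
  · rintro ⟨⟨hx1, hx2⟩, hr⟩
    have hxeqc : x = c := by
      have hfac : (x - c)*(4*(x^2+x*c+c^2) - 3) = 0 := by linear_combination hr - h4
      have hq : 0 < 4*(x^2+x*c+c^2) - 3 := by nlinarith [hx1, hclb]
      rcases mul_eq_zero.mp hfac with h | h
      · linarith [sub_eq_zero.mp h]
      · linarith
    have hs2' : (Real.sqrt (l₀^2+1))^2 = l₀^2+1 := Real.sq_sqrt (by positivity)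
    have hs0' : 0 < Real.sqrt (l₀^2+1) := Real.sqrt_pos.mpr (by positivity)
    have hlx' : l₀^2 = c^2*(l₀^2+1) := by
      rw [← hx, div_pow, hs2', div_mul_cancel₀ _ (by positivity : (l₀:ℝ)^2+1 ≠ 0)]
    have hc1 : c^2 < 1 := by nlinarith [hcub, hsq3, hcθ]
    have hll : l^2 = l₀^2 := by
      rw [hxeqc] at hlx
      have h1 : l^2*(1-c^2) = c^2 := by linarith [hlx]
      have h2 : l₀^2*(1-c^2) = c^2 := by linarith [hlx']
      have h3 : (l^2 - l₀^2)*(1-c^2) = 0 := by linear_combination h1 - h2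
      rcases mul_eq_zero.mp h3 with h | h
      · linarith
      · linarith
    calc l = Real.sqrt (l^2) := (Real.sqrt_sq hl.le).symm
      _ = Real.sqrt (l₀^2) := by rw [hll]
      _ = l₀ := Real.sqrt_sq hl₀pos.le
  · intro hleq
    have hxc : x = c := by rw [hxdef, hleq]; exact hx
    rw [hxc]
    exact ⟨⟨hclb, hcub⟩, h4⟩
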